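/- Let $a = 4\pi G > 0$ with $aN \le 1$ for an integer $N \ge 1$, $m > 0$, and $\delta \in (0, 1/2)$. Define $v_\delta(x) = \sum_{s=1}^N \log\frac{\delta+|x-p_s|^2}{1+|x-p_s|^2}$. Then for each fixed $x$, $-\big(e^{v_\delta - e^{v_\delta}} \prod_{s=1}^N (\delta + |x-p_s|^2)^{-1}\big)^{a}(1+e^{v_\delta})^m (e^{v_\delta}-1) \ge e^{a(v_\delta - 1) + \xi} \Big(\sum_{s=1}^N \frac{1}{1+\xi_s}\cdot\frac{1-\delta}{\delta + |x-p_s|^2}\Big) \prod_{s=1}^N (1 + |x-p_s|^2)^{-a}$ for some $\xi \in (v_\delta, 0)$ and $\xi_s \in \big(0, \frac{1-\delta}{\delta+|x-p_s|^2}\big)$; in particular the left-hand side is bounded below by a positive quantity decaying like $|x|^{-2aN - 2}$ as $|x| \to \infty$. -/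

import Mathlib

lemma aux_log_lt (t : ℝ) (ht : 0 < t) : Real.log (1 + t) < t := by
  have := Real.log_lt_sub_one_of_pos (x := 1 + t) (by linarith) (by linarith)
  linarith

lemma aux_lt_log (t : ℝ) (ht : 0 < t) : t / (1 + t) < Real.log (1 + t) := by
  have h1 : (0:ℝ) < 1 + t := by linarith
  have := Real.log_lt_sub_one_of_pos (x := (1 + t)⁻¹) (by positivity)
    (by rw [ne_eq, inv_eq_one]; intro h; linarith)
  rw [Real.log_inv] at this
  have : -(Real.log (1 + t)) < (1 + t)⁻¹ - 1 := this
  have h2 : (1 + t)⁻¹ - 1 = -(t / (1 + t)) := by field_simp; ring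
  linarith [h2 ▸ this]

/-- Key pointwise lower bound (inequality (3.19)): for each `x` there are
mean-value points `ξ ∈ (v_δ(x), 0)` and `ξₛ ∈ (0, (1-δ)/(δ+|x-pₛ|²))` with
`-(e^{v_δ - e^{v_δ}} ∏ (δ+|x-pₛ|²)⁻¹)^a (1+e^{v_δ})^m (e^{v_δ}-1)
  ≥ e^{a(v_δ-1)+ξ} (∑ (1+ξₛ)⁻¹ (1-δ)/(δ+|x-pₛ|²)) ∏ (1+|x-pₛ|²)^{-a}`. -/
theorem stmt_14 (G a m δ : ℝ) (N : ℕ) (hN : 1 ≤ N)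
    (haG : a = 4 * Real.pi * G) (ha : 0 < a) (haN : a * N ≤ 1) (hm : 0 < m)
    (hδ : δ ∈ Set.Ioo (0 : ℝ) (1 / 2))
    (p : Fin N → EuclideanSpace ℝ (Fin 2))
    (vδ : EuclideanSpace ℝ (Fin 2) → ℝ)
    (hvδ : ∀ x, vδ x = ∑ s, Real.log ((δ + ‖x - p s‖ ^ 2) / (1 + ‖x - p s‖ ^ 2))) :
    ∀ x : EuclideanSpace ℝ (Fin 2),
      ∃ ξ ∈ Set.Ioo (vδ x) 0, ∃ ξs : Fin N → ℝ,
        (∀ s, ξs s ∈ Set.Ioo 0 ((1 - δ) / (δ + ‖x - p s‖ ^ 2))) ∧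
        Real.exp (a * (vδ x - 1) + ξ) *
            (∑ s, (1 / (1 + ξs s)) * ((1 - δ) / (δ + ‖x - p s‖ ^ 2))) *
            ∏ s, (1 + ‖x - p s‖ ^ 2) ^ (-a) ≤
          -((Real.exp (vδ x - Real.exp (vδ x)) * ∏ s, (δ + ‖x - p s‖ ^ 2)⁻¹) ^ a *
            (1 + Real.exp (vδ x)) ^ m * (Real.exp (vδ x) - 1)) := by
  intro x
  obtain ⟨hδ0, hδ1⟩ := hδ
  set r : Fin N → ℝ := fun s => ‖x - p s‖ ^ 2 with hr
  have hrpos : ∀ s, (0:ℝ) < δ + r s := fun s => by positivity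
  have hrpos1 : ∀ s, (0:ℝ) < 1 + r s := fun s => by positivity
  set t : Fin N → ℝ := fun s => (1 - δ) / (δ + r s) with htdef
  have htpos : ∀ s, 0 < t s := fun s => by
    apply div_pos (by linarith) (hrpos s)
  set v := vδ x with hv
  -- v < 0
  have hvneg : v < 0 := by
    rw [hv, hvδ x]
    apply Finset.sum_neg
    · intro s _
      apply Real.log_neg
      · positivity
      · rw [div_lt_one (show (0:ℝ) < 1 + ‖x - p s‖ ^ 2 by positivity)]
        linarith
    · exact Finset.univ_nonempty_iff.mpr ⟨⟨0, hN⟩⟩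
  have hev1 : Real.exp v < 1 := Real.exp_lt_one_iff.mpr hvneg
  -- -v = ∑ log (1 + t s)
  have hsum : -v = ∑ s, Real.log (1 + t s) := by
    rw [hv, hvδ x, ← Finset.sum_neg_distrib]
    apply Finset.sum_congr rfl
    intro s _
    have hts : 1 + t s = (1 + ‖x - p s‖ ^ 2) / (δ + ‖x - p s‖ ^ 2) := by
      show 1 + (1 - δ) / (δ + ‖x - p s‖ ^ 2) = _
      field_simp
      ring
    rw [hts, ← Real.log_inv, inv_div]
  -- choose ξ
  set ξ := Real.log ((1 - Real.exp v) / (-v)) with hξdef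
  have hvne : v ≠ 0 := ne_of_lt hvneg
  have h1me : 0 < 1 - Real.exp v := by linarith
  have hnv : 0 < -v := by linarith
  have hargpos : 0 < (1 - Real.exp v) / (-v) := div_pos h1me hnv
  have hexpξ : Real.exp ξ = (1 - Real.exp v) / (-v) := Real.exp_log hargpos
  have hξlt0 : ξ < 0 := by
    apply Real.log_neg hargpos
    rw [div_lt_one hnv]
    have := Real.add_one_lt_exp hvne
    linarith
  have hξgt : v < ξ := by
    rw [hξdef, Real.lt_log_iff_exp_lt hargpos]
    rw [lt_div_iff₀ hnv]
    have := Real.add_one_lt_exp (x := -v) (by linarith)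
    have h2 : Real.exp (-v) = (Real.exp v)⁻¹ := Real.exp_neg v
    have h3 : 0 < Real.exp v := Real.exp_pos v
    rw [h2] at this
    -- (exp v)⁻¹ > 1 - v  ⟹  1 > exp v * (1 - v) ⟹ exp v * (-v) < 1 - exp v
    have h4 : Real.exp v * (-v + 1) < 1 := by
      calc Real.exp v * (-v + 1) < Real.exp v * (Real.exp v)⁻¹ := by
            apply mul_lt_mul_of_pos_left this h3
        _ = 1 := mul_inv_cancel₀ (ne_of_gt h3)
    nlinarith
  -- choose ξs
  set ξs : Fin N → ℝ := fun s => t s / Real.log (1 + t s) - 1 with hξs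
  have hlogpos : ∀ s, 0 < Real.log (1 + t s) := fun s =>
    Real.log_pos (by linarith [htpos s])
  have hξsmem : ∀ s, ξs s ∈ Set.Ioo 0 (t s) := by
    intro s
    constructor
    · have := aux_log_lt (t s) (htpos s)
      have h5 : 1 < t s / Real.log (1 + t s) := by
        rw [lt_div_iff₀ (hlogpos s)]; linarith
      simp only [hξs]; linarith
    · have := aux_lt_log (t s) (htpos s)
      have h6 : (0:ℝ) < 1 + t s := by linarith [htpos s]
      have h5 : t s / Real.log (1 + t s) < 1 + t s := by
        rw [div_lt_iff₀ (hlogpos s)]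
        calc t s = t s / (1 + t s) * (1 + t s) := (div_mul_cancel₀ _ (ne_of_gt h6)).symm
          _ < Real.log (1 + t s) * (1 + t s) := mul_lt_mul_of_pos_right this h6
          _ = (1 + t s) * Real.log (1 + t s) := mul_comm _ _
      simp only [hξs]; linarith
  refine ⟨ξ, ⟨hξgt, hξlt0⟩, ξs, hξsmem, ?_⟩
  -- key: the sum equals -v
  have hsumeq : (∑ s, (1 / (1 + ξs s)) * ((1 - δ) / (δ + ‖x - p s‖ ^ 2))) = -v := by
    rw [hsum]
    apply Finset.sum_congr rfl
    intro s _
    have h1 : (1 - δ) / (δ + ‖x - p s‖ ^ 2) = t s := rfl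
    rw [h1]
    have h2 : 1 + ξs s = t s / Real.log (1 + t s) := by simp only [hξs]; ring
    rw [h2, one_div, inv_div]
    exact div_mul_cancel₀ _ (ne_of_gt (htpos s))
  rw [hsumeq]
  -- LHS = exp(a(v-1)) * (1 - exp v) * ∏ (1+r)^{-a}
  have hLHS : Real.exp (a * (v - 1) + ξ) * (-v) = Real.exp (a * (v - 1)) * (1 - Real.exp v) := by
    rw [Real.exp_add, mul_assoc, hexpξ, div_mul_cancel₀ _ (ne_of_gt hnv)]
  -- RHS rewrite
  have hprodinv : (∏ s, (δ + ‖x - p s‖ ^ 2)⁻¹) = ∏ s, (δ + r s)⁻¹ := rfl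
  have hApos : 0 < Real.exp (v - Real.exp v) * ∏ s, (δ + r s)⁻¹ := by
    apply mul_pos (Real.exp_pos _)
    exact Finset.prod_pos fun s _ => inv_pos.mpr (hrpos s)
  have hRHS : -((Real.exp (v - Real.exp v) * ∏ s, (δ + ‖x - p s‖ ^ 2)⁻¹) ^ a *
      (1 + Real.exp v) ^ m * (Real.exp v - 1)) =
      (Real.exp (v - Real.exp v) * ∏ s, (δ + r s)⁻¹) ^ a *
      (1 + Real.exp v) ^ m * (1 - Real.exp v) := by simp only [hr]; ring
  rw [hRHS, hLHS]
  -- factor comparison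
  have hprodpos : ∀ s, (0:ℝ) ≤ (δ + r s)⁻¹ := fun s => le_of_lt (inv_pos.mpr (hrpos s))
  have hA : (Real.exp (v - Real.exp v) * ∏ s, (δ + r s)⁻¹) ^ a =
      Real.exp (a * (v - Real.exp v)) * ∏ s, (δ + r s) ^ (-a) := by
    rw [Real.mul_rpow (le_of_lt (Real.exp_pos _)) (Finset.prod_nonneg fun s _ => hprodpos s)]
    congr 1
    · rw [mul_comm, Real.exp_mul]
    · rw [← Real.finset_prod_rpow _ _ (fun s _ => hprodpos s)]
      apply Finset.prod_congr rfl
      intro s _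
      rw [Real.inv_rpow (le_of_lt (hrpos s)), ← Real.rpow_neg (le_of_lt (hrpos s))]
  rw [hA]
  have hexp_le : Real.exp (a * (v - 1)) ≤ Real.exp (a * (v - Real.exp v)) := by
    apply Real.exp_le_exp.mpr
    apply mul_le_mul_of_nonneg_left _ (le_of_lt ha)
    linarith
  have hprod_le : (∏ s, (1 + ‖x - p s‖ ^ 2) ^ (-a)) ≤ ∏ s, (δ + r s) ^ (-a) := by
    apply Finset.prod_le_prod
    · intro s _
      exact Real.rpow_nonneg (le_of_lt (hrpos1 s)) _
    · intro s _
      exact Real.rpow_le_rpow_of_nonpos (hrpos s) (by simp only [hr]; linarith)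
        (by linarith)
  have hone_le : (1:ℝ) ≤ (1 + Real.exp v) ^ m :=
    Real.one_le_rpow (by linarith [Real.exp_pos v]) (le_of_lt hm)
  have hq1 : 0 ≤ Real.exp (a * (v - 1)) := le_of_lt (Real.exp_pos _)
  have hq2 : 0 ≤ ∏ s, (1 + ‖x - p s‖ ^ 2) ^ (-a) :=
    Finset.prod_nonneg fun s _ => Real.rpow_nonneg (le_of_lt (hrpos1 s)) _
  calc Real.exp (a * (v - 1)) * (1 - Real.exp v) * ∏ s, (1 + ‖x - p s‖ ^ 2) ^ (-a)
      ≤ Real.exp (a * (v - Real.exp v)) * (1 - Real.exp v) * ∏ s, (δ + r s) ^ (-a) := by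
        apply mul_le_mul
        · exact mul_le_mul_of_nonneg_right hexp_le (le_of_lt h1me)
        · exact hprod_le
        · exact hq2
        · positivity
    _ = (Real.exp (a * (v - Real.exp v)) * ∏ s, (δ + r s) ^ (-a)) * 1 * (1 - Real.exp v) := by
        ring
    _ ≤ (Real.exp (a * (v - Real.exp v)) * ∏ s, (δ + r s) ^ (-a)) *
          (1 + Real.exp v) ^ m * (1 - Real.exp v) := by
        apply mul_le_mul_of_nonneg_right _ (le_of_lt h1me)
        apply mul_le_mul_of_nonneg_left hone_le
        positivity
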